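/- Let V be the Z/2Z-vector space with basis the set of (k,n)-truncated checkerboard Young diagrams (twisted or untwisted, fixed choice), and define the linear map Sq² : V → V by Sq²(Λ) = Σ_{Λ' ∈ A(Λ)} Λ', where A(Λ) is the set of diagrams obtained from Λ by adding one white box. Then Sq² ∘ Sq² = 0, and moreover Ker(Sq²) = Im(Sq²) ⊕ N, where N is the subspace spanned by the diagrams that are both irredundant and full. -/

import Mathlib

attribute [local instance] Classical.propDecidable

/-- A Young diagram, encoded by its sequence of row lengths: weakly decreasing and
eventually zero. -/
def IsYoungDiagram (Λ : ℕ → ℕ) : Prop :=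
  (∀ i j : ℕ, i ≤ j → Λ j ≤ Λ i) ∧ ∃ N, ∀ i, N ≤ i → Λ i = 0

/-- A `(k,n)`-truncated Young diagram: at most `k` rows, each of length at most `n - k`. -/
def IsTruncated (k n : ℕ) (Λ : ℕ → ℕ) : Prop :=
  IsYoungDiagram Λ ∧ (∀ i, k ≤ i → Λ i = 0) ∧ ∀ i, Λ i ≤ n - k

/-- Checkerboard coloring (`tw = false`: untwisted, box `(r,c)` black iff `r + c` even;
`tw = true`: twisted): the last box of 0-indexed row `i` is white iff `i + Λ i`
is even (untwisted) resp. odd (twisted). -/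
def RemovableCB (tw : Bool) (Λ : ℕ → ℕ) (i : ℕ) : Prop :=
  Λ (i + 1) < Λ i ∧ (i + Λ i) % 2 = (if tw then 1 else 0)

/-- A white box may be added at the end of row `i` keeping a valid `(k,n)`-truncated
diagram. -/
def AddableCB (tw : Bool) (k n : ℕ) (Λ : ℕ → ℕ) (i : ℕ) : Prop :=
  i < k ∧ Λ i < n - k ∧ (i = 0 ∨ Λ i < Λ (i - 1)) ∧ (i + Λ i) % 2 = (if tw then 0 else 1)

def IrredundantCB (tw : Bool) (Λ : ℕ → ℕ) : Prop := ∀ i, ¬ RemovableCB tw Λ i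

def FullCB (tw : Bool) (k n : ℕ) (Λ : ℕ → ℕ) : Prop := ∀ i, ¬ AddableCB tw k n Λ i

/-- Adding one box at the end of row `i`. -/
def addOne (Λ : ℕ → ℕ) (i : ℕ) : ℕ → ℕ := Function.update Λ i (Λ i + 1)


/-- Removing one box at the end of row `i`. -/
def removeOne (Λ : ℕ → ℕ) (i : ℕ) : ℕ → ℕ := Function.update Λ i (Λ i - 1)

/-- A row is bad if a white box can be added there or removed there. -/
def BadCB (tw : Bool) (k n : ℕ) (Λ : ℕ → ℕ) (i : ℕ) : Prop :=
  AddableCB tw k n Λ i ∨ RemovableCB tw Λ i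

/-- The largest bad row (0 if none). -/
noncomputable def maxBad (tw : Bool) (k n : ℕ) (Λ : ℕ → ℕ) : ℕ :=
  Nat.findGreatest (BadCB tw k n Λ) k

section Lemmas

variable {tw : Bool} {k n : ℕ} {Λ : ℕ → ℕ} {i j l : ℕ}

lemma addOne_apply : addOne Λ i j = if j = i then Λ i + 1 else Λ j :=
  Function.update_apply _ _ _ _

lemma removeOne_apply : removeOne Λ i j = if j = i then Λ i - 1 else Λ j :=
  Function.update_apply _ _ _ _

lemma addOne_same : addOne Λ i i = Λ i + 1 := Function.update_self _ _ _

lemma addOne_ne (h : j ≠ i) : addOne Λ i j = Λ j := Function.update_of_ne h _ _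

lemma removeOne_same : removeOne Λ i i = Λ i - 1 := Function.update_self _ _ _

lemma removeOne_ne (h : j ≠ i) : removeOne Λ i j = Λ j := Function.update_of_ne h _ _

lemma IsTruncated.mono (h : IsTruncated k n Λ) (hij : i ≤ j) : Λ j ≤ Λ i := h.1.1 _ _ hij

lemma trunc_addOne (h : IsTruncated k n Λ) (ha : AddableCB tw k n Λ i) :
    IsTruncated k n (addOne Λ i) := by
  obtain ⟨hik, hlt, hprev, -⟩ := ha
  refine ⟨⟨?_, ⟨k, fun j hj => ?_⟩⟩, fun j hj => ?_, fun j => ?_⟩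
  · intro a b hab
    simp only [addOne_apply]
    split_ifs with h1 h2 h3
    · exact le_refl _
    · -- b = i, a ≠ i, so a < i
      have hai : a < i := by omega
      have hp : Λ i < Λ (i - 1) := hprev.resolve_left (by omega)
      have hm : Λ (i - 1) ≤ Λ a := h.mono (by omega)
      omega
    · -- a = i, b ≠ i
      have hm : Λ b ≤ Λ i := h.mono (by omega)
      omega
    · exact h.mono hab
  · rw [addOne_ne (by omega)]; exact h.2.1 j (by omega)
  · rw [addOne_ne (by omega)]; exact h.2.1 j hj
  · rw [addOne_apply]
    split_ifs with h1
    · omega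
    · exact h.2.2 j

lemma addable_addOne_iff (ha : AddableCB tw k n Λ i) (hj : j ≠ i) :
    AddableCB tw k n (addOne Λ i) j ↔ AddableCB tw k n Λ j := by
  have hpar := ha.2.2.2
  unfold AddableCB
  rw [addOne_ne hj]
  rcases eq_or_ne j (i + 1) with rfl | hj1
  · have h1 : addOne Λ i (i + 1 - 1) = Λ i + 1 := by
      simp only [Nat.add_sub_cancel]; exact addOne_same
    rw [h1]
    simp only [Nat.add_sub_cancel]
    constructor
    · rintro ⟨h2, h3, h4, h5⟩
      refine ⟨h2, h3, Or.inr ?_, h5⟩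
      rcases h4 with h4 | h4
      · omega
      · rcases eq_or_ne (Λ (i + 1)) (Λ i) with he | hne
        · exfalso; rw [he] at h5; cases tw <;> simp only [Bool.false_eq_true,
            if_true, if_false] at h5 hpar <;> omega
        · omega
    · rintro ⟨h2, h3, h4, h5⟩
      refine ⟨h2, h3, Or.inr ?_, h5⟩
      rcases h4 with h4 | h4
      · omega
      · omega
  · rw [addOne_ne (show j - 1 ≠ i by omega)]

lemma removable_addOne_iff (ha : AddableCB tw k n Λ i) (hl : l ≠ i) :
    RemovableCB tw (addOne Λ i) l ↔ RemovableCB tw Λ l := by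
  have hpar := ha.2.2.2
  unfold RemovableCB
  rw [addOne_ne hl]
  rcases eq_or_ne (l + 1) i with he | hne
  · have h2 : addOne Λ i (l + 1) = Λ (l + 1) + 1 := by
      rw [he, addOne_same, ← he]
    rw [h2]
    constructor
    · rintro ⟨h3, h4⟩; exact ⟨by omega, h4⟩
    · rintro ⟨h3, h4⟩
      refine ⟨?_, h4⟩
      rcases eq_or_ne (Λ l) (Λ (l + 1) + 1) with he2 | hne2
      · exfalso
        rw [he2] at h4
        rw [← he] at hpar
        cases tw <;> simp only [Bool.false_eq_true, if_true, if_false] at h4 hpar <;> omega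
      · omega
  · rw [addOne_ne hne]

lemma removable_addOne_self (h : IsTruncated k n Λ) (ha : AddableCB tw k n Λ i) :
    RemovableCB tw (addOne Λ i) i := by
  have hpar := ha.2.2.2
  have h1 : addOne Λ i (i + 1) = Λ (i + 1) := addOne_ne (by omega)
  have h2 : Λ (i + 1) ≤ Λ i := h.mono (by omega)
  refine ⟨?_, ?_⟩
  · rw [h1, addOne_same]; omega
  · rw [addOne_same]
    cases tw <;> simp only [Bool.false_eq_true, if_true, if_false] at hpar ⊢ <;> omega

lemma not_add_of_rem (hr : RemovableCB tw Λ i) : ¬ AddableCB tw k n Λ i := by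
  intro ha
  have h1 := hr.2
  have h2 := ha.2.2.2
  cases tw <;> simp_all

lemma not_addable_addOne_self (ha : AddableCB tw k n Λ i) :
    ¬ AddableCB tw k n (addOne Λ i) i := by
  intro h
  have h1 := ha.2.2.2
  have h2 := h.2.2.2
  rw [addOne_same] at h2
  cases tw <;> simp only [Bool.false_eq_true, if_true, if_false] at h1 h2 <;> omega

lemma bad_lt (h : IsTruncated k n Λ) (hb : BadCB tw k n Λ i) : i < k := by
  rcases hb with hb | hb
  · exact hb.1
  · by_contra hik
    have h0 : Λ i = 0 := h.2.1 i (by omega)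
    have := hb.1
    omega

end Lemmas

section Lemmas2

variable {tw : Bool} {k n : ℕ} {Λ : ℕ → ℕ} {i j l : ℕ}

lemma rem_pos (hr : RemovableCB tw Λ i) : 1 ≤ Λ i := by
  have := hr.1; omega

lemma addOne_removeOne (hr : RemovableCB tw Λ i) : addOne (removeOne Λ i) i = Λ := by
  have h1 := rem_pos hr
  funext x
  rw [addOne_apply]
  split_ifs with hx
  · rw [removeOne_same, hx]; omega
  · rw [removeOne_ne hx]

lemma removeOne_addOne : removeOne (addOne Λ i) i = Λ := by
  funext x
  rw [removeOne_apply]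
  split_ifs with hx
  · rw [addOne_same, hx]; omega
  · rw [addOne_ne hx]

lemma addable_removeOne (h : IsTruncated k n Λ) (hr : RemovableCB tw Λ i) :
    AddableCB tw k n (removeOne Λ i) i := by
  have h1 := rem_pos hr
  have hik : i < k := bad_lt h (Or.inr hr)
  have hbd : Λ i ≤ n - k := h.2.2 i
  have hpar := hr.2
  refine ⟨hik, ?_, ?_, ?_⟩
  · rw [removeOne_same]; omega
  · rcases eq_or_ne i 0 with rfl | hi0
    · exact Or.inl rfl
    · refine Or.inr ?_
      rw [removeOne_same, removeOne_ne (show i - 1 ≠ i by omega)]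
      have := h.mono (show i - 1 ≤ i by omega)
      omega
  · rw [removeOne_same]
    cases tw <;> simp only [Bool.false_eq_true, if_true, if_false] at hpar ⊢ <;> omega

lemma trunc_removeOne (h : IsTruncated k n Λ) (hr : RemovableCB tw Λ i) :
    IsTruncated k n (removeOne Λ i) := by
  have h1 := hr.1
  refine ⟨⟨?_, ⟨k + i + 1, fun j hj => ?_⟩⟩, fun j hj => ?_, fun j => ?_⟩
  · intro a b hab
    simp only [removeOne_apply]
    split_ifs with hb ha ha
    · exact le_refl _
    · -- b = i, a ≠ i, a < i
      have hm : Λ i ≤ Λ a := h.mono (by omega)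
      omega
    · -- a = i, b ≠ i, so i < b, b ≥ i + 1
      have hm : Λ b ≤ Λ (i + 1) := h.mono (by omega)
      omega
    · exact h.mono hab
  · rw [removeOne_apply]
    split_ifs with hx
    · omega
    · exact h.2.1 j (by omega)
  · rw [removeOne_apply]
    split_ifs with hx
    · subst hx; have := h.2.1 j hj; omega
    · exact h.2.1 j hj
  · rw [removeOne_apply]
    split_ifs with hx
    · have := h.2.2 i; omega
    · exact h.2.2 j

lemma removeOne_addOne_comm (hij : j ≠ i) :
    removeOne (addOne Λ j) i = addOne (removeOne Λ i) j := by
  funext x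
  simp only [removeOne_apply, addOne_apply]
  split_ifs <;> try subst_vars
  all_goals first | rfl | omega

lemma addOne_comm (hij : i ≠ j) :
    addOne (addOne Λ i) j = addOne (addOne Λ j) i := by
  funext x
  simp only [addOne_apply]
  split_ifs <;> try subst_vars
  all_goals first | rfl | omega

lemma bad_addOne_iff (h : IsTruncated k n Λ) (ha : AddableCB tw k n Λ j) (hl : l ≠ j) :
    BadCB tw k n (addOne Λ j) l ↔ BadCB tw k n Λ l :=
  or_congr (addable_addOne_iff ha hl) (removable_addOne_iff ha hl)

lemma le_maxBad (h : IsTruncated k n Λ) (hb : BadCB tw k n Λ i) : i ≤ maxBad tw k n Λ :=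
  Nat.le_findGreatest (le_of_lt (bad_lt h hb)) hb

lemma maxBad_bad (h : IsTruncated k n Λ) (hb : BadCB tw k n Λ i) :
    BadCB tw k n Λ (maxBad tw k n Λ) :=
  Nat.findGreatest_spec (le_of_lt (bad_lt h hb)) hb

lemma not_bad_of_gt (h : IsTruncated k n Λ) (hl : maxBad tw k n Λ < l) :
    ¬ BadCB tw k n Λ l := by
  intro hb
  exact absurd (le_maxBad h hb) (by omega)

lemma maxBad_addOne (h : IsTruncated k n Λ) (ha : AddableCB tw k n Λ j)
    (hj : j ≤ maxBad tw k n Λ) : maxBad tw k n (addOne Λ j) = maxBad tw k n Λ := by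
  set i₀ := maxBad tw k n Λ with hi₀
  have hbad : BadCB tw k n Λ i₀ := maxBad_bad h (Or.inl ha)
  have hik : i₀ < k := bad_lt h hbad
  have htr : IsTruncated k n (addOne Λ j) := trunc_addOne h ha
  have hbad' : BadCB tw k n (addOne Λ j) i₀ := by
    rcases eq_or_ne i₀ j with rfl | hne
    · exact Or.inr (removable_addOne_self h ha)
    · exact (bad_addOne_iff h ha hne).mpr hbad
  refine le_antisymm ?_ (le_maxBad htr hbad')
  by_contra hgt
  push_neg at hgt
  have hm : BadCB tw k n (addOne Λ j) (maxBad tw k n (addOne Λ j)) := maxBad_bad htr hbad'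
  have hne : maxBad tw k n (addOne Λ j) ≠ j := by omega
  exact not_bad_of_gt h hgt ((bad_addOne_iff h ha hne).mp hm)

lemma harmonic_iff :
    (∀ i, ¬ BadCB tw k n Λ i) ↔ (IrredundantCB tw Λ ∧ FullCB tw k n Λ) := by
  constructor
  · intro h
    exact ⟨fun i hr => h i (Or.inr hr), fun i ha => h i (Or.inl ha)⟩
  · rintro ⟨h1, h2⟩ i hb
    rcases hb with hb | hb
    · exact h2 i hb
    · exact h1 i hb

end Lemmas2

/-- Extension of the basis-indexing function to arbitrary `ℕ → ℕ` (value `0` off the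
set of diagrams). -/
noncomputable def extB (k n : ℕ) {V : Type*} [AddCommGroup V] [Module (ZMod 2) V]
    (B : Module.Basis {Λ : ℕ → ℕ // IsTruncated k n Λ} (ZMod 2) V) (f : ℕ → ℕ) : V :=
  if h : IsTruncated k n f then B ⟨f, h⟩ else 0

section LinAlg

variable (tw : Bool) (k n : ℕ) {V : Type*} [AddCommGroup V] [Module (ZMod 2) V]
  (B : Module.Basis {Λ : ℕ → ℕ // IsTruncated k n Λ} (ZMod 2) V)

lemma self_add (v : V) : v + v = 0 := by
  have h := two_smul (ZMod 2) v
  have h2 : (2 : ZMod 2) = 0 := rfl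
  rw [h2, zero_smul] at h
  exact h.symm

/-- The contracting homotopy. -/
noncomputable def Hmap : V →ₗ[ZMod 2] V :=
  Module.Basis.constr B (ZMod 2) fun Λ =>
    if RemovableCB tw Λ.1 (maxBad tw k n Λ.1) then
      extB k n B (removeOne Λ.1 (maxBad tw k n Λ.1)) else 0

/-- Projection onto the span of irredundant-and-full diagrams. -/
noncomputable def Pmap : V →ₗ[ZMod 2] V :=
  Module.Basis.constr B (ZMod 2) fun Λ =>
    if IrredundantCB tw Λ.1 ∧ FullCB tw k n Λ.1 then B Λ else 0

lemma Hmap_basis (Λ : {Λ : ℕ → ℕ // IsTruncated k n Λ}) :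
    Hmap tw k n B (B Λ) =
      if RemovableCB tw Λ.1 (maxBad tw k n Λ.1) then
        extB k n B (removeOne Λ.1 (maxBad tw k n Λ.1)) else 0 :=
  Module.Basis.constr_basis _ _ _ _

lemma Pmap_basis (Λ : {Λ : ℕ → ℕ // IsTruncated k n Λ}) :
    Pmap tw k n B (B Λ) =
      if IrredundantCB tw Λ.1 ∧ FullCB tw k n Λ.1 then B Λ else 0 :=
  Module.Basis.constr_basis _ _ _ _

lemma extB_of_trunc {f : ℕ → ℕ} (h : IsTruncated k n f) :
    extB k n B f = B ⟨f, h⟩ := dif_pos h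

end LinAlg

section Key

variable {tw : Bool} {k n : ℕ} {V : Type*} [AddCommGroup V] [Module (ZMod 2) V]
  {B : Module.Basis {Λ : ℕ → ℕ // IsTruncated k n Λ} (ZMod 2) V}

lemma Hmap_basis' (f : ℕ → ℕ) (hf : IsTruncated k n f) :
    Hmap tw k n B (B ⟨f, hf⟩) =
      if RemovableCB tw f (maxBad tw k n f) then
        extB k n B (removeOne f (maxBad tw k n f)) else 0 :=
  Module.Basis.constr_basis _ _ _ _

lemma Pmap_basis' (f : ℕ → ℕ) (hf : IsTruncated k n f) :
    Pmap tw k n B (B ⟨f, hf⟩) =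
      if IrredundantCB tw f ∧ FullCB tw k n f then B ⟨f, hf⟩ else 0 :=
  Module.Basis.constr_basis _ _ _ _

variable (Sq : V →ₗ[ZMod 2] V)
  (hSq : ∀ f (hf : IsTruncated k n f), Sq (B ⟨f, hf⟩) = ∑ i ∈ Finset.range k,
    if AddableCB tw k n f i then extB k n B (addOne f i) else 0)

include hSq

lemma key1 (f : ℕ → ℕ) (hf : IsTruncated k n f) : Sq (Sq (B ⟨f, hf⟩)) = 0 := by
  rw [hSq f hf, map_sum]
  have hcongr : ∀ j ∈ Finset.range k,
      Sq (if AddableCB tw k n f j then extB k n B (addOne f j) else 0) =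
      ∑ i ∈ Finset.range k,
        (if AddableCB tw k n f j ∧ AddableCB tw k n (addOne f j) i then
          extB k n B (addOne (addOne f j) i) else 0) := by
    intro j _
    by_cases hA : AddableCB tw k n f j
    · rw [if_pos hA, extB_of_trunc k n B (trunc_addOne hf hA), hSq]
      refine Finset.sum_congr rfl fun i _ => ?_
      simp only [hA, true_and]
    · rw [if_neg hA, map_zero]
      exact (Finset.sum_eq_zero fun i _ => if_neg (fun hc => hA hc.1)).symm
  rw [Finset.sum_congr rfl hcongr, ← Finset.sum_product']
  refine Finset.sum_involution (fun p _ => (p.2, p.1)) ?_ ?_ ?_ ?_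
  · rintro ⟨a, b⟩ hp
    simp only
    rcases eq_or_ne a b with rfl | hne
    · rw [if_neg (fun hc => not_addable_addOne_self hc.1 hc.2), add_zero]
    · by_cases hc : AddableCB tw k n f a ∧ AddableCB tw k n (addOne f a) b
      · have hb : AddableCB tw k n f b := (addable_addOne_iff hc.1 hne.symm).mp hc.2
        have hab : AddableCB tw k n (addOne f b) a := (addable_addOne_iff hb hne).mpr hc.1
        rw [if_pos hc, if_pos ⟨hb, hab⟩, addOne_comm hne]
        exact self_add _
      · have hc2 : ¬ (AddableCB tw k n f b ∧ AddableCB tw k n (addOne f b) a) := by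
          rintro ⟨h1, h2⟩
          have ha' : AddableCB tw k n f a := (addable_addOne_iff h1 hne).mp h2
          exact hc ⟨ha', (addable_addOne_iff ha' (Ne.symm hne)).mpr h1⟩
        rw [if_neg hc, if_neg hc2, add_zero]
  · rintro ⟨a, b⟩ hp hne heq
    have hab : a = b := by
      have := congrArg Prod.fst heq
      simp only at this
      have := congrArg Prod.snd heq
      simp_all
    subst hab
    exact hne (if_neg (fun hc => not_addable_addOne_self hc.1 hc.2))
  · rintro ⟨a, b⟩ hp
    simp only [Finset.mem_product] at hp ⊢
    exact ⟨hp.2, hp.1⟩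
  · rintro ⟨a, b⟩ _
    rfl

lemma key2 (f : ℕ → ℕ) (hf : IsTruncated k n f) :
    Sq (Hmap tw k n B (B ⟨f, hf⟩)) + Hmap tw k n B (Sq (B ⟨f, hf⟩))
      + Pmap tw k n B (B ⟨f, hf⟩) = B ⟨f, hf⟩ := by
  by_cases hh : ∀ i, ¬ BadCB tw k n f i
  · -- harmonic case
    obtain ⟨hirr, hfull⟩ := harmonic_iff.mp hh
    have hS0 : Sq (B ⟨f, hf⟩) = 0 := by
      rw [hSq f hf]
      exact Finset.sum_eq_zero fun i _ => if_neg (hfull i)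
    rw [Hmap_basis', if_neg (fun hr => hh _ (Or.inr hr)), hS0, map_zero, map_zero,
      Pmap_basis', if_pos ⟨hirr, hfull⟩, zero_add, zero_add]
  · push_neg at hh
    obtain ⟨w, hw⟩ := hh
    set i₀ := maxBad tw k n f with hi₀def
    have hbad : BadCB tw k n f i₀ := maxBad_bad hf hw
    have hi₀k : i₀ < k := bad_lt hf hbad
    by_cases hrem : RemovableCB tw f i₀
    · -- case: top bad row is removable
      set g := removeOne f i₀ with hgdef
      have htrg : IsTruncated k n g := trunc_removeOne hf hrem
      have haddg : AddableCB tw k n g i₀ := addable_removeOne hf hrem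
      have heq : addOne g i₀ = f := addOne_removeOne hrem
      have hH : Hmap tw k n B (B ⟨f, hf⟩) = B ⟨g, htrg⟩ := by
        rw [Hmap_basis', if_pos hrem, extB_of_trunc k n B htrg]
      have hsplit : Sq (Hmap tw k n B (B ⟨f, hf⟩)) = B ⟨f, hf⟩ +
          ∑ j ∈ (Finset.range k).erase i₀,
            (if AddableCB tw k n f j then extB k n B (addOne g j) else 0) := by
        rw [hH, hSq g htrg, ← Finset.add_sum_erase _ _ (Finset.mem_range.mpr hi₀k)]
        congr 1
        · rw [if_pos haddg, heq, extB_of_trunc k n B hf]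
        · refine Finset.sum_congr rfl fun j hj => ?_
          have hjne : j ≠ i₀ := Finset.ne_of_mem_erase hj
          have hiff : AddableCB tw k n g j ↔ AddableCB tw k n f j := by
            conv_rhs => rw [← heq]
            exact (addable_addOne_iff haddg hjne).symm
          rw [if_congr hiff rfl rfl]
      have hHSq : Hmap tw k n B (Sq (B ⟨f, hf⟩)) =
          ∑ j ∈ Finset.range k,
            (if AddableCB tw k n f j then extB k n B (addOne g j) else 0) := by
        rw [hSq f hf, map_sum]
        refine Finset.sum_congr rfl fun j _ => ?_
        by_cases hA : AddableCB tw k n f j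
        · rw [if_pos hA, if_pos hA, extB_of_trunc k n B (trunc_addOne hf hA), Hmap_basis']
          have hjne : j ≠ i₀ := fun he => (not_add_of_rem hrem) (he ▸ hA)
          have hji₀ : j ≤ i₀ := le_maxBad hf (Or.inl hA)
          have hmB : maxBad tw k n (addOne f j) = i₀ := maxBad_addOne hf hA hji₀
          rw [hmB, if_pos ((removable_addOne_iff hA (Ne.symm hjne)).mpr hrem),
            removeOne_addOne_comm hjne]
        · rw [if_neg hA, if_neg hA, map_zero]
      have hP : Pmap tw k n B (B ⟨f, hf⟩) = 0 := by
        rw [Pmap_basis', if_neg]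
        rintro ⟨h1, -⟩
        exact h1 i₀ hrem
      rw [hsplit, hHSq, hP, add_zero,
        ← Finset.add_sum_erase _ _ (Finset.mem_range.mpr hi₀k),
        if_neg (not_add_of_rem hrem), zero_add, add_assoc, self_add, add_zero]
    · -- case: top bad row is addable
      have hadd : AddableCB tw k n f i₀ := hbad.resolve_right hrem
      have hH0 : Hmap tw k n B (B ⟨f, hf⟩) = 0 := by
        rw [Hmap_basis', if_neg hrem]
      have hHSq : Hmap tw k n B (Sq (B ⟨f, hf⟩)) =
          ∑ j ∈ Finset.range k, (if j = i₀ then B ⟨f, hf⟩ else 0) := by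
        rw [hSq f hf, map_sum]
        refine Finset.sum_congr rfl fun j _ => ?_
        by_cases hA : AddableCB tw k n f j
        · rw [if_pos hA, extB_of_trunc k n B (trunc_addOne hf hA), Hmap_basis']
          have hji₀ : j ≤ i₀ := le_maxBad hf (Or.inl hA)
          have hmB : maxBad tw k n (addOne f j) = i₀ := maxBad_addOne hf hA hji₀
          rcases eq_or_ne j i₀ with rfl | hne
          · rw [hmB, if_pos (removable_addOne_self hf hA), removeOne_addOne,
              extB_of_trunc k n B hf, if_pos rfl]
          · rw [hmB, if_neg (fun hr => hrem ((removable_addOne_iff hA (Ne.symm hne)).mp hr)),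
              if_neg hne]
        · rw [if_neg hA, map_zero, if_neg (fun he : j = i₀ => hA (he ▸ hadd))]
      have hP : Pmap tw k n B (B ⟨f, hf⟩) = 0 := by
        rw [Pmap_basis', if_neg]
        rintro ⟨-, h2⟩
        exact h2 i₀ hadd
      rw [hH0, map_zero, zero_add, hP, add_zero, hHSq, Finset.sum_ite_eq',
        if_pos (Finset.mem_range.mpr hi₀k)]

end Key

/-- on the `ℤ/2`-vector space with basis the `(k,n)`-truncated
checkerboard Young diagrams, with `Sq²(Λ) = Σ_{Λ' = Λ + a white box} Λ'`, one has
`Sq² ∘ Sq² = 0` and `Ker Sq² = Im Sq² ⊕ N`, where `N` is spanned by the diagrams that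
are both irredundant and full. -/
theorem stmt11 (tw : Bool) (k n : ℕ) (hkn : k ≤ n)
    (V : Type*) [AddCommGroup V] [Module (ZMod 2) V]
    (B : Module.Basis {Λ : ℕ → ℕ // IsTruncated k n Λ} (ZMod 2) V)
    (Sq : V →ₗ[ZMod 2] V)
    (hSq : ∀ Λ : {Λ : ℕ → ℕ // IsTruncated k n Λ},
      Sq (B Λ) = ∑ i ∈ Finset.range k,
        if AddableCB tw k n Λ.1 i then extB k n B (addOne Λ.1 i) else 0) :
    Sq ∘ₗ Sq = 0 ∧
    LinearMap.ker Sq = LinearMap.range Sq ⊔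
      Submodule.span (ZMod 2)
        (⇑B '' {Λ | IrredundantCB tw Λ.1 ∧ FullCB tw k n Λ.1}) ∧
    LinearMap.range Sq ⊓
      Submodule.span (ZMod 2)
        (⇑B '' {Λ | IrredundantCB tw Λ.1 ∧ FullCB tw k n Λ.1}) = ⊥ := by
  have hSq' : ∀ (f : ℕ → ℕ) (hf : IsTruncated k n f), Sq (B ⟨f, hf⟩) =
      ∑ i ∈ Finset.range k,
        if AddableCB tw k n f i then extB k n B (addOne f i) else 0 :=
    fun f hf => hSq ⟨f, hf⟩
  set N := Submodule.span (ZMod 2)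
    (⇑B '' {Λ : {Λ : ℕ → ℕ // IsTruncated k n Λ} |
      IrredundantCB tw Λ.1 ∧ FullCB tw k n Λ.1}) with hNdef
  have hSq2 : Sq ∘ₗ Sq = 0 := by
    apply Module.Basis.ext B
    rintro ⟨f, hf⟩
    simpa using key1 Sq hSq' f hf
  have hkey : ∀ v : V,
      Sq (Hmap tw k n B v) + Hmap tw k n B (Sq v) + Pmap tw k n B v = v := by
    have hL : (Sq ∘ₗ Hmap tw k n B + Hmap tw k n B ∘ₗ Sq + Pmap tw k n B)
        = LinearMap.id := by
      apply Module.Basis.ext B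
      rintro ⟨f, hf⟩
      simpa using key2 Sq hSq' f hf
    intro v
    have h := LinearMap.congr_fun hL v
    simpa using h
  have hNker : N ≤ LinearMap.ker Sq := by
    refine Submodule.span_le.mpr ?_
    rintro v ⟨⟨f, hf⟩, ⟨hirr, hfull⟩, rfl⟩
    simp only [SetLike.mem_coe, LinearMap.mem_ker]
    rw [hSq' f hf]
    exact Finset.sum_eq_zero fun i _ => if_neg (hfull i)
  have hRker : LinearMap.range Sq ≤ LinearMap.ker Sq := by
    rintro v ⟨w, rfl⟩
    rw [LinearMap.mem_ker]
    have := LinearMap.congr_fun hSq2 w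
    simpa using this
  have hPmem : ∀ v : V, Pmap tw k n B v ∈ N := by
    intro v
    have hv : v ∈ (⊤ : Submodule (ZMod 2) V) := trivial
    rw [← B.span_eq] at hv
    refine Submodule.span_induction
      (p := fun x _ => Pmap tw k n B x ∈ N) ?_ ?_ ?_ ?_ hv
    · rintro x ⟨⟨f, hf⟩, rfl⟩
      rw [Pmap_basis']
      split_ifs with hc
      · exact Submodule.subset_span ⟨⟨f, hf⟩, hc, rfl⟩
      · exact N.zero_mem
    · show Pmap tw k n B 0 ∈ N
      rw [map_zero]; exact N.zero_mem
    · intro x y _ _ hx hy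
      show Pmap tw k n B (x + y) ∈ N
      rw [map_add]; exact N.add_mem hx hy
    · intro a x _ hx
      show Pmap tw k n B (a • x) ∈ N
      rw [map_smul]; exact N.smul_mem a hx
  have hPid : ∀ v ∈ N, Pmap tw k n B v = v := by
    intro v hv
    refine Submodule.span_induction
      (p := fun x _ => Pmap tw k n B x = x) ?_ ?_ ?_ ?_ hv
    · rintro x ⟨⟨f, hf⟩, hc, rfl⟩
      rw [Pmap_basis']
      exact if_pos hc
    · show Pmap tw k n B 0 = 0
      rw [map_zero]
    · intro x y _ _ hx hy
      show Pmap tw k n B (x + y) = x + y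
      rw [map_add, hx, hy]
    · intro a x _ hx
      show Pmap tw k n B (a • x) = a • x
      rw [map_smul, hx]
  have hPSq : ∀ v : V, Pmap tw k n B (Sq v) = 0 := by
    have hL : Pmap tw k n B ∘ₗ Sq = 0 := by
      apply Module.Basis.ext B
      rintro ⟨f, hf⟩
      simp only [LinearMap.comp_apply, LinearMap.zero_apply]
      rw [hSq' f hf, map_sum]
      refine Finset.sum_eq_zero fun i _ => ?_
      by_cases hA : AddableCB tw k n f i
      · rw [if_pos hA, extB_of_trunc k n B (trunc_addOne hf hA), Pmap_basis', if_neg]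
        rintro ⟨h1, -⟩
        exact h1 i (removable_addOne_self hf hA)
      · rw [if_neg hA, map_zero]
    intro v
    have := LinearMap.congr_fun hL v
    simpa using this
  refine ⟨hSq2, ?_, ?_⟩
  · apply le_antisymm
    · intro v hv
      have h1 := hkey v
      rw [LinearMap.mem_ker] at hv
      rw [hv, map_zero, add_zero] at h1
      rw [← h1]
      exact Submodule.add_mem _
        (Submodule.mem_sup_left ⟨Hmap tw k n B v, rfl⟩)
        (Submodule.mem_sup_right (hPmem v))
    · exact sup_le hRker hNker
  · rw [eq_bot_iff]
    rintro v ⟨hvr, hvN⟩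
    obtain ⟨w, rfl⟩ := hvr
    have h1 : Pmap tw k n B (Sq w) = Sq w := hPid _ hvN
    have h2 : Pmap tw k n B (Sq w) = 0 := hPSq w
    rw [Submodule.mem_bot, ← h1, h2]
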